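/- Let κ be a field of characteristic 2. The κ-algebra homomorphism κ[[a,b,c]]/(a² − cb⁴) → κ[[u,v]] given by a ↦ u²v, b ↦ u, c ↦ v² is injective with image the subring κ[[u, u²v, v²]], and a power series f ∈ κ[[u,v]] lies in κ[[u,u²v,v²]] if and only if its image in κ[[u,v]]/(u²) lies in the subring κ[[u,v²]]/(u²). -/

import Mathlib

noncomputable section

/-- The effect of the substitution `a ↦ u²v, b ↦ u, c ↦ v²` on exponent vectors. -/
def expMap9 (d : Fin 3 →₀ ℕ) : Fin 2 →₀ ℕ :=
  d 0 • (Finsupp.single 0 2 + Finsupp.single 1 1) + d 1 • Finsupp.single 0 1 +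
    d 2 • Finsupp.single 1 2

/-- `φ : κ[[a,b,c]] → κ[[u,v]]` is the substitution homomorphism `a ↦ u²v`, `b ↦ u`, `c ↦ v²`
precisely when its coefficients are given by the evident formula. -/
def IsSubstHom9 (κ : Type*) [Field κ]
    (φ : MvPowerSeries (Fin 3) κ →ₐ[κ] MvPowerSeries (Fin 2) κ) : Prop :=
  ∀ (f : MvPowerSeries (Fin 3) κ) (e : Fin 2 →₀ ℕ),
    MvPowerSeries.coeff e (φ f) =
      ∑ᶠ d : Fin 3 →₀ ℕ, if expMap9 d = e then MvPowerSeries.coeff d f else 0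

/-- The complete monomial subring `κ[[u, u²v, v²]] ⊆ κ[[u,v]]`. -/
def monomialSubring9 (κ : Type*) [Field κ] : Set (MvPowerSeries (Fin 2) κ) :=
  {f | ∀ d : Fin 2 →₀ ℕ, MvPowerSeries.coeff d f ≠ 0 →
    d ∈ AddSubmonoid.closure ({Finsupp.single 0 1, Finsupp.single 0 2 + Finsupp.single 1 1,
      Finsupp.single 1 2} : Set (Fin 2 →₀ ℕ))}

/-- The subring `κ[[u, v²]] ⊆ κ[[u,v]]`: power series all of whose monomials have even
`v`-exponent. -/
def uAndVSquared (κ : Type*) [Field κ] : Set (MvPowerSeries (Fin 2) κ) :=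
  {g | ∀ d : Fin 2 →₀ ℕ, MvPowerSeries.coeff d g ≠ 0 → Even (d 1)}

namespace Scratch9
open Finsupp MvPowerSeries Finset

variable {κ : Type*} [Field κ]

/-- build an element of `Fin 3 →₀ ℕ` from coordinates -/
def mk3 (a b c : ℕ) : Fin 3 →₀ ℕ :=
  Finsupp.single 0 a + Finsupp.single 1 b + Finsupp.single 2 c

@[simp] lemma mk3_apply0 (a b c : ℕ) : mk3 a b c 0 = a := by
  simp [mk3, Finsupp.single_apply]
@[simp] lemma mk3_apply1 (a b c : ℕ) : mk3 a b c 1 = b := by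
  simp [mk3, Finsupp.single_apply]
@[simp] lemma mk3_apply2 (a b c : ℕ) : mk3 a b c 2 = c := by
  simp [mk3, Finsupp.single_apply]

lemma ext3 {d d' : Fin 3 →₀ ℕ} (h0 : d 0 = d' 0) (h1 : d 1 = d' 1) (h2 : d 2 = d' 2) :
    d = d' := by
  ext i; fin_cases i <;> assumption

lemma ext2' {e e' : Fin 2 →₀ ℕ} (h0 : e 0 = e' 0) (h1 : e 1 = e' 1) : e = e' := by
  ext i; fin_cases i <;> assumption

lemma le3 {d d' : Fin 3 →₀ ℕ} : d ≤ d' ↔ d 0 ≤ d' 0 ∧ d 1 ≤ d' 1 ∧ d 2 ≤ d' 2 := by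
  rw [Finsupp.le_def]
  constructor
  · exact fun h => ⟨h 0, h 1, h 2⟩
  · rintro ⟨a, b, c⟩ i; fin_cases i <;> assumption

lemma le2' {e e' : Fin 2 →₀ ℕ} : e ≤ e' ↔ e 0 ≤ e' 0 ∧ e 1 ≤ e' 1 := by
  rw [Finsupp.le_def]
  constructor
  · exact fun h => ⟨h 0, h 1⟩
  · rintro ⟨a, b⟩ i; fin_cases i <;> assumption

@[simp] lemma expMap9_apply0 (d : Fin 3 →₀ ℕ) : expMap9 d 0 = 2 * d 0 + d 1 := by
  simp [expMap9, Finsupp.single_apply]; ring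
@[simp] lemma expMap9_apply1 (d : Fin 3 →₀ ℕ) : expMap9 d 1 = d 0 + 2 * d 2 := by
  simp [expMap9, Finsupp.single_apply]; ring

lemma expMap9_eq_iff {d : Fin 3 →₀ ℕ} {e : Fin 2 →₀ ℕ} :
    expMap9 d = e ↔ 2 * d 0 + d 1 = e 0 ∧ d 0 + 2 * d 2 = e 1 := by
  constructor
  · rintro rfl; simp
  · rintro ⟨h0, h1⟩; exact ext2' (by simpa using h0) (by simpa using h1)

/-- bound for the fiber of `e` -/
def bnd (e : Fin 2 →₀ ℕ) : Fin 3 →₀ ℕ := mk3 (e 1) (e 0) (e 1)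

/-- concrete finite fiber sum -/
def fiberSum (f : MvPowerSeries (Fin 3) κ) (e : Fin 2 →₀ ℕ) : κ :=
  ∑ d ∈ Finset.Iic (bnd e), if expMap9 d = e then MvPowerSeries.coeff d f else 0

lemma finsum_eq_fiberSum (f : MvPowerSeries (Fin 3) κ) (e : Fin 2 →₀ ℕ) :
    (∑ᶠ d : Fin 3 →₀ ℕ, if expMap9 d = e then MvPowerSeries.coeff d f else 0)
      = fiberSum f e := by
  apply finsum_eq_finset_sum_of_support_subset
  intro d hd
  simp only [Function.mem_support, ne_eq] at hd
  have h : expMap9 d = e := by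
    by_contra h; simp [h] at hd
  obtain ⟨h0, h1⟩ := expMap9_eq_iff.mp h
  simp only [Finset.coe_Iic, Set.mem_Iic]
  rw [le3]
  refine ⟨?_, ?_, ?_⟩ <;> simp [bnd] <;> omega

/-- the canonical "upper fiber" sum -/
def Tsum (f : MvPowerSeries (Fin 3) κ) (d : Fin 3 →₀ ℕ) : κ :=
  ∑ j ∈ Finset.range (d 2 + 1), if 4 * j ≤ d 1 then
    MvPowerSeries.coeff (mk3 (d 0 + 2 * j) (d 1 - 4 * j) (d 2 - j)) f else 0

lemma fiberSum_eq_Tsum (f : MvPowerSeries (Fin 3) κ) (d : Fin 3 →₀ ℕ) (hd : d 0 < 2) :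
    fiberSum f (expMap9 d) = Tsum f d := by
  rw [fiberSum, Tsum, ← Finset.sum_filter, ← Finset.sum_filter]
  refine Finset.sum_nbij' (fun d' => d 2 - d' 2)
    (fun j => mk3 (d 0 + 2 * j) (d 1 - 4 * j) (d 2 - j)) ?_ ?_ ?_ ?_ ?_
  · intro d' hd'
    simp only [Finset.mem_filter, Finset.mem_Iic] at hd'
    obtain ⟨_, h⟩ := hd'
    obtain ⟨h0, h1⟩ := expMap9_eq_iff.mp h
    simp only [expMap9_apply0, expMap9_apply1] at h0 h1
    simp only [Finset.mem_filter, Finset.mem_range]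
    omega
  · intro j hj
    simp only [Finset.mem_filter, Finset.mem_range] at hj
    simp only [Finset.mem_filter, Finset.mem_Iic]
    constructor
    · rw [le3]; simp [bnd]; omega
    · rw [expMap9_eq_iff]; simp; omega
  · intro d' hd'
    simp only [Finset.mem_filter, Finset.mem_Iic] at hd'
    obtain ⟨_, h⟩ := hd'
    obtain ⟨h0, h1⟩ := expMap9_eq_iff.mp h
    simp only [expMap9_apply0, expMap9_apply1] at h0 h1
    apply ext3 <;> simp <;> omega
  · intro j hj
    simp only [Finset.mem_filter, Finset.mem_range] at hj
    simp; omega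
  · intro d' hd'
    simp only [Finset.mem_filter, Finset.mem_Iic] at hd'
    obtain ⟨_, h⟩ := hd'
    obtain ⟨h0, h1⟩ := expMap9_eq_iff.mp h
    simp only [expMap9_apply0, expMap9_apply1] at h0 h1
    exact congrArg (fun x => MvPowerSeries.coeff x f)
      (ext3 (by simp; omega) (by simp; omega) (by simp; omega))

def tF : Fin 3 →₀ ℕ := mk3 2 0 0
def sF : Fin 3 →₀ ℕ := mk3 0 4 1

lemma mk3_self (d : Fin 3 →₀ ℕ) : mk3 (d 0) (d 1) (d 2) = d :=
  ext3 (by simp) (by simp) (by simp)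

lemma le_tF {d : Fin 3 →₀ ℕ} : tF ≤ d ↔ 2 ≤ d 0 := by
  rw [le3]; simp [tF]

lemma le_sF {d : Fin 3 →₀ ℕ} : sF ≤ d ↔ 4 ≤ d 1 ∧ 1 ≤ d 2 := by
  rw [le3]; simp [sF]

/-- coefficients of the quotient witness -/
def qf (f : MvPowerSeries (Fin 3) κ) : MvPowerSeries (Fin 3) κ :=
  fun c => ∑ j ∈ Finset.range (c 2 + 1), if 4 * j ≤ c 1 then
    MvPowerSeries.coeff (mk3 (c 0 + 2 * j + 2) (c 1 - 4 * j) (c 2 - j)) f else 0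

lemma qf_sub_t (f : MvPowerSeries (Fin 3) κ) {d : Fin 3 →₀ ℕ} (h : 2 ≤ d 0) :
    MvPowerSeries.coeff (d - tF) (qf f) = Tsum f d := by
  rw [MvPowerSeries.coeff_apply]
  have e0 : (d - tF) 0 = d 0 - 2 := by simp [tF, Finsupp.tsub_apply]
  have e1 : (d - tF) 1 = d 1 := by simp [tF, Finsupp.tsub_apply]
  have e2 : (d - tF) 2 = d 2 := by simp [tF, Finsupp.tsub_apply]
  simp only [qf, Tsum, e0, e1, e2]
  apply Finset.sum_congr rfl
  intro j _
  have h' : d 0 - 2 + 2 * j + 2 = d 0 + 2 * j := by omega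
  rw [h']

lemma qf_sub_s (f : MvPowerSeries (Fin 3) κ) {d : Fin 3 →₀ ℕ} (h1 : 4 ≤ d 1) (h2 : 1 ≤ d 2) :
    Tsum f d = MvPowerSeries.coeff d f + MvPowerSeries.coeff (d - sF) (qf f) := by
  have e0 : (d - sF) 0 = d 0 := by simp [sF, Finsupp.tsub_apply]
  have e1 : (d - sF) 1 = d 1 - 4 := by simp [sF, Finsupp.tsub_apply]
  have e2 : (d - sF) 2 = d 2 - 1 := by simp [sF, Finsupp.tsub_apply]
  simp only [qf, Tsum, MvPowerSeries.coeff_apply, e0, e1, e2]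
  rw [Finset.sum_range_succ']
  have hr : d 2 - 1 + 1 = d 2 := by omega
  rw [hr]
  simp only [Nat.mul_zero, Nat.zero_le, if_true, Nat.mul_one, Nat.add_zero, Nat.sub_zero,
    mul_zero, add_zero, tsub_zero]
  rw [mk3_self, add_comm]
  congr 1
  apply Finset.sum_congr rfl
  intro j _
  have c1 : 4 * (j + 1) ≤ d 1 ↔ 4 * j ≤ d 1 - 4 := by omega
  have a0 : d 0 + 2 * (j + 1) = d 0 + 2 * j + 2 := by omega
  have a1 : d 1 - 4 * (j + 1) = d 1 - 4 - 4 * j := by omega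
  have a2 : d 2 - (j + 1) = d 2 - 1 - j := by omega
  simp only [c1, a0, a1, a2]

lemma Tsum_eq_self (f : MvPowerSeries (Fin 3) κ) {d : Fin 3 →₀ ℕ}
    (h : ¬(4 ≤ d 1 ∧ 1 ≤ d 2)) : Tsum f d = MvPowerSeries.coeff d f := by
  rw [Tsum, Finset.sum_eq_single 0]
  · simp [mk3_self]
  · intro j hj hj0
    rw [Finset.mem_range] at hj
    rw [if_neg]
    omega
  · intro h0; simp at h0

lemma ker_sub_span (f : MvPowerSeries (Fin 3) κ) (hker : ∀ e, fiberSum f e = 0) :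
    f ∈ Ideal.span {(MvPowerSeries.X 0 : MvPowerSeries (Fin 3) κ) ^ 2 -
      MvPowerSeries.X 2 * (MvPowerSeries.X 1) ^ 4} := by
  rw [Ideal.mem_span_singleton']
  refine ⟨qf f, ?_⟩
  have ht : (MvPowerSeries.X 0 : MvPowerSeries (Fin 3) κ) ^ 2 =
      MvPowerSeries.monomial tF 1 := by
    have h' : (Finsupp.single 0 2 : Fin 3 →₀ ℕ) = tF :=
      ext3 (by simp [tF, Finsupp.single_apply]) (by simp [tF, Finsupp.single_apply])
        (by simp [tF, Finsupp.single_apply])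
    rw [MvPowerSeries.X_pow_eq, h']
  have hs : (MvPowerSeries.X 2 : MvPowerSeries (Fin 3) κ) * (MvPowerSeries.X 1) ^ 4 =
      MvPowerSeries.monomial sF 1 := by
    have h' : (Finsupp.single 2 1 + Finsupp.single 1 4 : Fin 3 →₀ ℕ) = sF :=
      ext3 (by simp [sF, Finsupp.single_apply]) (by simp [sF, Finsupp.single_apply])
        (by simp [sF, Finsupp.single_apply])
    rw [MvPowerSeries.X_pow_eq, MvPowerSeries.X_def, MvPowerSeries.monomial_mul_monomial,
      one_mul, h']
  rw [ht, hs]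
  apply MvPowerSeries.ext
  intro d
  rw [mul_sub, map_sub, MvPowerSeries.coeff_mul_monomial, MvPowerSeries.coeff_mul_monomial]
  by_cases h : 2 ≤ d 0
  · rw [if_pos (le_tF.mpr h), mul_one, qf_sub_t f h]
    by_cases hsd : 4 ≤ d 1 ∧ 1 ≤ d 2
    · rw [if_pos (le_sF.mpr hsd), mul_one, qf_sub_s f hsd.1 hsd.2]
      ring
    · rw [if_neg (fun hc => hsd (le_sF.mp hc)), Tsum_eq_self f hsd]
      ring
  · rw [if_neg (fun hc => h (le_tF.mp hc))]
    have h0 : Tsum f d = 0 := by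
      rw [← fiberSum_eq_Tsum f d (by omega)]; exact hker _
    by_cases hsd : 4 ≤ d 1 ∧ 1 ≤ d 2
    · rw [if_pos (le_sF.mpr hsd), mul_one]
      have := qf_sub_s f hsd.1 hsd.2
      rw [h0] at this
      linear_combination this
    · rw [if_neg (fun hc => hsd (le_sF.mp hc))]
      rw [Tsum_eq_self f hsd] at h0
      rw [h0]; ring

-- ### closure lemmas

def gens : Set (Fin 2 →₀ ℕ) :=
  {Finsupp.single 0 1, Finsupp.single 0 2 + Finsupp.single 1 1, Finsupp.single 1 2}

def evenOrBig : AddSubmonoid (Fin 2 →₀ ℕ) where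
  carrier := {e | Even (e 1) ∨ 2 ≤ e 0}
  zero_mem' := Or.inl (by simp)
  add_mem' := fun {a b} ha hb => by
    simp only [Set.mem_setOf_eq, Finsupp.add_apply, Nat.even_iff] at *
    omega

lemma closure_imp {e : Fin 2 →₀ ℕ} (h : e ∈ AddSubmonoid.closure gens) :
    Even (e 1) ∨ 2 ≤ e 0 := by
  have hsub : AddSubmonoid.closure gens ≤ evenOrBig := by
    apply AddSubmonoid.closure_le.mpr
    intro x hx
    rcases hx with rfl | rfl | rfl
    · exact Or.inl (by simp [Finsupp.single_apply])
    · exact Or.inr (by simp [Finsupp.single_apply])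
    · exact Or.inl (by simp [Finsupp.single_apply])
  exact hsub h

lemma mem_gens1 : Finsupp.single 0 1 ∈ AddSubmonoid.closure gens :=
  AddSubmonoid.subset_closure (by simp [gens])
lemma mem_gens2 : Finsupp.single 0 2 + Finsupp.single 1 1 ∈ AddSubmonoid.closure gens :=
  AddSubmonoid.subset_closure (by simp [gens])
lemma mem_gens3 : Finsupp.single 1 2 ∈ AddSubmonoid.closure gens :=
  AddSubmonoid.subset_closure (by simp [gens])

lemma imp_closure {e : Fin 2 →₀ ℕ} (h : Even (e 1) ∨ 2 ≤ e 0) :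
    e ∈ AddSubmonoid.closure gens := by
  by_cases he : Even (e 1)
  · rw [Nat.even_iff] at he
    have : e = e 0 • Finsupp.single 0 1 + (e 1 / 2) • Finsupp.single 1 2 :=
      ext2' (by simp [Finsupp.single_apply]) (by simp [Finsupp.single_apply]; omega)
    rw [this]
    exact add_mem (nsmul_mem mem_gens1 _) (nsmul_mem mem_gens3 _)
  · have h2 : 2 ≤ e 0 := h.resolve_left he
    rw [Nat.even_iff] at he
    have : e = (Finsupp.single 0 2 + Finsupp.single 1 1) + ((e 0 - 2) • Finsupp.single 0 1
        + ((e 1 - 1) / 2) • Finsupp.single 1 2) :=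
      ext2' (by simp [Finsupp.single_apply]; omega) (by simp [Finsupp.single_apply]; omega)
    rw [this]
    exact add_mem mem_gens2 (add_mem (nsmul_mem mem_gens1 _)
      (nsmul_mem mem_gens3 _))

lemma expMap9_mem_closure (d : Fin 3 →₀ ℕ) : expMap9 d ∈ AddSubmonoid.closure gens := by
  rw [expMap9]
  exact add_mem (add_mem (nsmul_mem mem_gens2 _)
    (nsmul_mem mem_gens1 _)) (nsmul_mem mem_gens3 _)

-- ### fiberSum of the binomial is zero

lemma fiberSum_monomial (n : Fin 3 →₀ ℕ) (e : Fin 2 →₀ ℕ) :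
    fiberSum (MvPowerSeries.monomial n (1 : κ)) e = if expMap9 n = e then 1 else 0 := by
  rw [fiberSum, Finset.sum_eq_single n]
  · simp [MvPowerSeries.coeff_monomial_same]
  · intro b _ hb
    split
    · exact MvPowerSeries.coeff_monomial_ne hb _
    · rfl
  · intro hn
    split
    · rename_i hg
      exfalso
      apply hn
      obtain ⟨h0, h1⟩ := expMap9_eq_iff.mp hg
      rw [Finset.mem_Iic, le3]
      refine ⟨?_, ?_, ?_⟩ <;> simp [bnd] <;> omega
    · rfl

lemma fiberSum_sub (f g : MvPowerSeries (Fin 3) κ) (e : Fin 2 →₀ ℕ) :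
    fiberSum (f - g) e = fiberSum f e - fiberSum g e := by
  rw [fiberSum, fiberSum, fiberSum, ← Finset.sum_sub_distrib]
  apply Finset.sum_congr rfl
  intro d _
  rw [map_sub]
  split <;> simp

lemma fiberSum_binomial (e : Fin 2 →₀ ℕ) :
    fiberSum ((MvPowerSeries.X 0 : MvPowerSeries (Fin 3) κ) ^ 2 -
      MvPowerSeries.X 2 * (MvPowerSeries.X 1) ^ 4) e = 0 := by
  have ht : (MvPowerSeries.X 0 : MvPowerSeries (Fin 3) κ) ^ 2 =
      MvPowerSeries.monomial tF 1 := by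
    have h' : (Finsupp.single 0 2 : Fin 3 →₀ ℕ) = tF :=
      ext3 (by simp [tF, Finsupp.single_apply]) (by simp [tF, Finsupp.single_apply])
        (by simp [tF, Finsupp.single_apply])
    rw [MvPowerSeries.X_pow_eq, h']
  have hs : (MvPowerSeries.X 2 : MvPowerSeries (Fin 3) κ) * (MvPowerSeries.X 1) ^ 4 =
      MvPowerSeries.monomial sF 1 := by
    have h' : (Finsupp.single 2 1 + Finsupp.single 1 4 : Fin 3 →₀ ℕ) = sF :=
      ext3 (by simp [sF, Finsupp.single_apply]) (by simp [sF, Finsupp.single_apply])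
        (by simp [sF, Finsupp.single_apply])
    rw [MvPowerSeries.X_pow_eq, MvPowerSeries.X_def, MvPowerSeries.monomial_mul_monomial,
      one_mul, h']
  have hts : expMap9 tF = expMap9 sF :=
    ext2' (by simp [tF, sF]) (by simp [tF, sF])
  rw [ht, hs, fiberSum_sub, fiberSum_monomial, fiberSum_monomial, hts, sub_self]

-- ### the section and the range

/-- a canonical preimage of `f` under the substitution map -/
def sec (f : MvPowerSeries (Fin 2) κ) : MvPowerSeries (Fin 3) κ :=
  fun d => if d 0 < 2 then MvPowerSeries.coeff (expMap9 d) f else 0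

lemma fiberSum_sec_of_ex (f : MvPowerSeries (Fin 2) κ) {e : Fin 2 →₀ ℕ} {d : Fin 3 →₀ ℕ}
    (hd : expMap9 d = e) (hd0 : d 0 < 2) :
    fiberSum (sec f) e = MvPowerSeries.coeff e f := by
  obtain ⟨hd1, hd2⟩ := expMap9_eq_iff.mp hd
  rw [fiberSum, Finset.sum_eq_single_of_mem d]
  · rw [if_pos hd, MvPowerSeries.coeff_apply]
    show (if d 0 < 2 then MvPowerSeries.coeff (expMap9 d) f else 0) = _
    rw [if_pos hd0, hd]
  · rw [Finset.mem_Iic, le3]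
    refine ⟨?_, ?_, ?_⟩ <;> simp [bnd] <;> omega
  · intro b _ hb
    split
    · rename_i hg
      obtain ⟨hb1, hb2⟩ := expMap9_eq_iff.mp hg
      rw [MvPowerSeries.coeff_apply]
      show (if b 0 < 2 then MvPowerSeries.coeff (expMap9 b) f else 0) = 0
      rw [if_neg]
      intro hb0
      exact hb (ext3 (by omega) (by omega) (by omega))
    · rfl

lemma fiberSum_sec_zero (f : MvPowerSeries (Fin 2) κ) {e : Fin 2 →₀ ℕ}
    (h : ¬(Even (e 1) ∨ 2 ≤ e 0)) : fiberSum (sec f) e = 0 := by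
  rw [Nat.even_iff] at h
  rw [fiberSum]
  apply Finset.sum_eq_zero
  intro b _
  split
  · rename_i hg
    obtain ⟨hb1, hb2⟩ := expMap9_eq_iff.mp hg
    rw [MvPowerSeries.coeff_apply]
    show (if b 0 < 2 then MvPowerSeries.coeff (expMap9 b) f else 0) = 0
    rw [if_neg]
    omega
  · rfl

-- ### span of X0^2 in two variables

lemma le_single02 {e : Fin 2 →₀ ℕ} : (Finsupp.single 0 2 : Fin 2 →₀ ℕ) ≤ e ↔ 2 ≤ e 0 := by
  rw [le2']; simp [Finsupp.single_apply]

lemma mem_spanX0sq_iff (p : MvPowerSeries (Fin 2) κ) :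
    p ∈ Ideal.span {(MvPowerSeries.X 0 : MvPowerSeries (Fin 2) κ) ^ 2} ↔
      ∀ e : Fin 2 →₀ ℕ, MvPowerSeries.coeff e p ≠ 0 → 2 ≤ e 0 := by
  have hX : (MvPowerSeries.X 0 : MvPowerSeries (Fin 2) κ) ^ 2 =
      MvPowerSeries.monomial (Finsupp.single 0 2) 1 := MvPowerSeries.X_pow_eq 0 2
  constructor
  · rw [Ideal.mem_span_singleton']
    rintro ⟨q, rfl⟩ e he
    rw [hX, MvPowerSeries.coeff_mul_monomial] at he
    by_contra hlt
    rw [if_neg (fun hc => hlt (le_single02.mp hc))] at he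
    exact he rfl
  · intro h
    rw [Ideal.mem_span_singleton']
    refine ⟨show MvPowerSeries (Fin 2) κ from fun c => MvPowerSeries.coeff (c + Finsupp.single 0 2) p, ?_⟩
    rw [hX]
    apply MvPowerSeries.ext
    intro e
    rw [MvPowerSeries.coeff_mul_monomial]
    by_cases hle : (Finsupp.single 0 2 : Fin 2 →₀ ℕ) ≤ e
    · rw [if_pos hle, mul_one, MvPowerSeries.coeff_apply]
      show MvPowerSeries.coeff (e - Finsupp.single 0 2 + Finsupp.single 0 2) p = _
      rw [tsub_add_cancel_of_le hle]
    · rw [if_neg hle]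
      symm
      by_contra h0
      exact hle (le_single02.mpr (h e h0))

end Scratch9

open Scratch9

/-- Let `κ` be a field of characteristic `2`.  The `κ`-algebra homomorphism
`κ[[a,b,c]]/(a² − cb⁴) → κ[[u,v]]` given by `a ↦ u²v`, `b ↦ u`, `c ↦ v²` is injective
(the kernel of the substitution map is exactly `(a² − cb⁴)`), with image the subring
`κ[[u, u²v, v²]]`; and a power series `f` lies in `κ[[u, u²v, v²]]` if and only if its image
in `κ[[u,v]]/(u²)` lies in the subring `κ[[u,v²]]/(u²)`. -/
theorem substHom9_ker_range_cartesian (κ : Type*) [Field κ] [CharP κ 2]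
    (φ : MvPowerSeries (Fin 3) κ →ₐ[κ] MvPowerSeries (Fin 2) κ) (hφ : IsSubstHom9 κ φ) :
    RingHom.ker φ.toRingHom =
      Ideal.span {(MvPowerSeries.X 0) ^ 2 - MvPowerSeries.X 2 * (MvPowerSeries.X 1) ^ 4} ∧
    Set.range φ = monomialSubring9 κ ∧
    (∀ f : MvPowerSeries (Fin 2) κ, f ∈ monomialSubring9 κ ↔
      ∃ g ∈ uAndVSquared κ,
        f - g ∈ Ideal.span {(MvPowerSeries.X 0 : MvPowerSeries (Fin 2) κ) ^ 2}) := by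
  have hco : ∀ (f : MvPowerSeries (Fin 3) κ) (e : Fin 2 →₀ ℕ),
      MvPowerSeries.coeff e (φ f) = fiberSum f e := fun f e => by
    rw [hφ f e, finsum_eq_fiberSum]
  refine ⟨?_, ?_, ?_⟩
  · -- kernel
    apply le_antisymm
    · intro f hf
      rw [RingHom.mem_ker] at hf
      have hf' : φ f = 0 := hf
      apply ker_sub_span
      intro e
      rw [← hco f e, hf', map_zero]
    · rw [Ideal.span_le]
      intro x hx
      simp only [Set.mem_singleton_iff] at hx
      subst hx
      rw [SetLike.mem_coe, RingHom.mem_ker]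
      show φ _ = 0
      apply MvPowerSeries.ext
      intro e
      rw [map_zero, hco, fiberSum_binomial]
  · -- range
    apply Set.ext
    intro f
    constructor
    · rintro ⟨F, rfl⟩ d hd
      rw [hco] at hd
      obtain ⟨d', _, hne⟩ := Finset.exists_ne_zero_of_sum_ne_zero hd
      have hg : expMap9 d' = d := by
        by_contra hc
        rw [if_neg hc] at hne
        exact hne rfl
      rw [← hg]
      exact expMap9_mem_closure d'
    · intro hf
      refine ⟨sec f, ?_⟩
      apply MvPowerSeries.ext
      intro e
      rw [hco]
      by_cases he : Even (e 1)
      · have he' := Nat.even_iff.mp he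
        have heq : expMap9 (mk3 0 (e 0) (e 1 / 2)) = e :=
          expMap9_eq_iff.mpr ⟨by simp, by simp; omega⟩
        exact fiberSum_sec_of_ex f heq (by simp)
      · have he' : e 1 % 2 = 1 := by
          rcases Nat.even_or_odd (e 1) with h | h
          · exact absurd h he
          · exact Nat.odd_iff.mp h
        by_cases h2 : 2 ≤ e 0
        · have heq : expMap9 (mk3 1 (e 0 - 2) ((e 1 - 1) / 2)) = e :=
            expMap9_eq_iff.mpr ⟨by simp; omega, by simp; omega⟩
          exact fiberSum_sec_of_ex f heq (by simp)
        · rw [fiberSum_sec_zero f (by tauto)]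
          symm
          by_contra h0
          rcases closure_imp (hf e h0) with hc | hc
          · exact he hc
          · exact h2 hc
  · -- cartesian square
    intro f
    constructor
    · intro hf
      set g : MvPowerSeries (Fin 2) κ :=
        (fun e => if e 1 % 2 = 0 then MvPowerSeries.coeff e f else 0) with hgdef
      have hgco : ∀ e : Fin 2 →₀ ℕ, MvPowerSeries.coeff e g =
          if e 1 % 2 = 0 then MvPowerSeries.coeff e f else 0 := fun e => rfl
      refine ⟨g, ?_, ?_⟩
      · intro e he
        rw [hgco] at he
        rw [Nat.even_iff]
        by_contra hodd
        rw [if_neg hodd] at he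
        exact he rfl
      · rw [mem_spanX0sq_iff]
        intro e he
        by_cases hev : e 1 % 2 = 0
        · exfalso
          rw [map_sub, hgco, if_pos hev, sub_self] at he
          exact he rfl
        · have hne : MvPowerSeries.coeff e f ≠ 0 := by
            intro h0
            apply he
            rw [map_sub, h0, hgco, if_neg hev, sub_zero]
          rcases closure_imp (hf e hne) with hc | hc
          · exact absurd (Nat.even_iff.mp hc) hev
          · exact hc
    · rintro ⟨g, hg, hfg⟩ e he
      rw [mem_spanX0sq_iff] at hfg
      apply imp_closure
      by_cases hgz : MvPowerSeries.coeff e g = 0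
      · right
        apply hfg e
        rw [map_sub, hgz, sub_zero]
        exact he
      · left
        exact hg e hgz
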